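/- If A and A' are contractible Banach algebras with diagonals M = Σ aₙ⊗bₙ and M' = Σ a'ₘ⊗b'ₘ, then Σₙ,ₘ (aₙ⊗a'ₘ)⊗(bₙ⊗b'ₘ) is a diagonal for the projective tensor product Banach algebra A ⊗^γ A'; in particular A ⊗^γ A' is contractible. -/

import Mathlib

/-- A Banach `A`-bimodule structure on a normed space `E`. -/
structure BanachBimodule (A E : Type) [NonUnitalNormedRing A] [NormedSpace ℂ A]
    [NormedAddCommGroup E] [NormedSpace ℂ E] where
  l : A →L[ℂ] E →L[ℂ] E
  r : A →L[ℂ] E →L[ℂ] E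
  l_mul : ∀ a b x, l (a * b) x = l a (l b x)
  r_mul : ∀ a b x, r (a * b) x = r b (r a x)
  lr_comm : ∀ a b x, l a (r b x) = r b (l a x)

/-- A Banach algebra `A` is contractible if every bounded derivation from `A`
into any Banach `A`-bimodule is inner. -/
def Contractible (A : Type) [NonUnitalNormedRing A] [NormedSpace ℂ A] : Prop :=
  ∀ (E : Type) [NormedAddCommGroup E] [NormedSpace ℂ E] [CompleteSpace E],
    ∀ (B : BanachBimodule A E) (D : A →L[ℂ] E),
      (∀ a b, D (a * b) = B.l a (D b) + B.r b (D a)) →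
      ∃ v : E, ∀ a, D a = B.l a v - B.r a v

/-- The families `a b : ι → A` represent a diagonal `M = Σ aₙ ⊗ bₙ` of the
unital Banach algebra `A` in the completed projective tensor product `A ⊗^γ A`:
the representing series is absolutely convergent, `Δ(M) = 1`, and
`(c ⊗ 1) M = M (1 ⊗ c)` for all `c` (the latter equality in `A ⊗^γ A` being
tested against all bounded bilinear functionals, which separate the points
of `A ⊗^γ A`). -/
def IsDiagonal {A : Type} [NormedRing A] [NormedAlgebra ℂ A] {ι : Type}
    (a b : ι → A) : Prop :=
  Summable (fun n => ‖a n‖ * ‖b n‖) ∧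
  (∑' n, a n * b n) = 1 ∧
  ∀ (φ : A →L[ℂ] A →L[ℂ] ℂ) (c : A),
    (∑' n, φ (c * a n) (b n)) = ∑' n, φ (a n) (b n * c)

/-- A realization of the completed projective tensor product `A ⊗^γ A'` of two
unital Banach algebras as a Banach algebra `B`, characterized by its universal
property: a contractive multiplicative bilinear map `ι` with dense span such
that every bounded bilinear map into a Banach space lifts contractively. -/
structure ProjTensorAlg (A A' B : Type)
    [NormedRing A] [NormedAlgebra ℂ A] [NormedRing A'] [NormedAlgebra ℂ A']
    [NormedRing B] [NormedAlgebra ℂ B] where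
  ι : A →L[ℂ] A' →L[ℂ] B
  ι_mul : ∀ a a' c c', ι a a' * ι c c' = ι (a * c) (a' * c')
  ι_one : ι 1 1 = 1
  norm_ι : ∀ a a', ‖ι a a'‖ ≤ ‖a‖ * ‖a'‖
  dense_span : Dense
    (Submodule.span ℂ (Set.range fun p : A × A' => ι p.1 p.2) : Set B)
  lift : ∀ (W : Type) [NormedAddCommGroup W] [NormedSpace ℂ W] [CompleteSpace W],
    ∀ φ : A →L[ℂ] A' →L[ℂ] W,
      ∃ L : B →L[ℂ] W, (∀ a a', L (ι a a') = φ a a') ∧ ‖L‖ ≤ ‖φ‖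

theorem contractible_of_isDiagonal {B : Type} [NormedRing B] [NormedAlgebra ℂ B]
    [CompleteSpace B] {ι : Type} {M N : ι → B} (h : IsDiagonal M N) : Contractible B := by
  obtain ⟨hS, h1, hcomm⟩ := h
  intro E _ _ _ Bi D hD
  have hMN : Summable fun i => M i * N i :=
    Summable.of_norm_bounded hS fun i => norm_mul_le _ _
  have hsum0 : Summable fun i => Bi.l (M i) (D (N i)) := by
    apply Summable.of_norm_bounded (hS.mul_left (‖Bi.l‖ * ‖D‖))
    intro i
    calc ‖Bi.l (M i) (D (N i))‖ ≤ ‖Bi.l‖ * ‖M i‖ * ‖D (N i)‖ := Bi.l.le_opNorm₂ _ _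
      _ ≤ ‖Bi.l‖ * ‖M i‖ * (‖D‖ * ‖N i‖) :=
          mul_le_mul_of_nonneg_left (D.le_opNorm _) (by positivity)
      _ = ‖Bi.l‖ * ‖D‖ * (‖M i‖ * ‖N i‖) := by ring
  set v₀ := ∑' i, Bi.l (M i) (D (N i)) with hv₀
  refine ⟨v₀ - Bi.r 1 (D 1), fun c => ?_⟩
  have hsum1 : Summable fun i => Bi.l (c * M i) (D (N i)) := by
    apply Summable.of_norm_bounded (hS.mul_left (‖Bi.l‖ * ‖c‖ * ‖D‖))
    intro i
    calc ‖Bi.l (c * M i) (D (N i))‖ ≤ ‖Bi.l‖ * ‖c * M i‖ * ‖D (N i)‖ := Bi.l.le_opNorm₂ _ _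
      _ ≤ ‖Bi.l‖ * (‖c‖ * ‖M i‖) * (‖D‖ * ‖N i‖) := by
          gcongr
          · exact norm_mul_le _ _
          · exact D.le_opNorm _
      _ = ‖Bi.l‖ * ‖c‖ * ‖D‖ * (‖M i‖ * ‖N i‖) := by ring
  have hsum2 : Summable fun i => Bi.l (M i) (D (N i * c)) := by
    apply Summable.of_norm_bounded (hS.mul_left (‖Bi.l‖ * ‖D‖ * ‖c‖))
    intro i
    calc ‖Bi.l (M i) (D (N i * c))‖ ≤ ‖Bi.l‖ * ‖M i‖ * ‖D (N i * c)‖ := Bi.l.le_opNorm₂ _ _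
      _ ≤ ‖Bi.l‖ * ‖M i‖ * (‖D‖ * (‖N i‖ * ‖c‖)) :=
          mul_le_mul_of_nonneg_left ((D.le_opNorm _).trans
            (mul_le_mul_of_nonneg_left (norm_mul_le _ _) (norm_nonneg _))) (by positivity)
      _ = ‖Bi.l‖ * ‖D‖ * ‖c‖ * (‖M i‖ * ‖N i‖) := by ring
  have hswap : (∑' i, Bi.l (c * M i) (D (N i))) = ∑' i, Bi.l (M i) (D (N i * c)) := by
    rw [NormedSpace.eq_iff_forall_dual_eq ℂ]
    intro lam
    set phiL : B →L[ℂ] B →L[ℂ] ℂ :=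
      ((ContinuousLinearMap.compL ℂ B E ℂ).flip D).comp
        (((ContinuousLinearMap.compL ℂ E E ℂ) lam).comp Bi.l) with hphiL
    have hφap : ∀ x y, phiL x y = lam (Bi.l x (D y)) := by
      intro x y; simp [hphiL]
    calc lam (∑' i, Bi.l (c * M i) (D (N i)))
        = ∑' i, phiL (c * M i) (N i) := by
          rw [lam.map_tsum hsum1]; exact tsum_congr fun i => (hφap _ _).symm
      _ = ∑' i, phiL (M i) (N i * c) := hcomm phiL c
      _ = lam (∑' i, Bi.l (M i) (D (N i * c))) := by
          rw [lam.map_tsum hsum2]; exact tsum_congr fun i => hφap _ _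
  have expand : ∀ i, Bi.l (M i) (D (N i * c))
      = Bi.l (M i * N i) (D c) + Bi.r c (Bi.l (M i) (D (N i))) := by
    intro i
    rw [hD, map_add, ← Bi.l_mul, Bi.lr_comm]
  have hsum3 : Summable fun i => Bi.l (M i * N i) (D c) :=
    hMN.map (Bi.l.flip (D c)).toLinearMap.toAddMonoidHom (Bi.l.flip (D c)).continuous
  have hsum4 : Summable fun i => Bi.r c (Bi.l (M i) (D (N i))) :=
    hsum0.map (Bi.r c).toLinearMap.toAddMonoidHom (Bi.r c).continuous
  have hlc : Bi.l c v₀ = Bi.l 1 (D c) + Bi.r c v₀ := by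
    calc Bi.l c v₀ = ∑' i, Bi.l c (Bi.l (M i) (D (N i))) := (Bi.l c).map_tsum hsum0
      _ = ∑' i, Bi.l (c * M i) (D (N i)) := tsum_congr fun i => (Bi.l_mul c (M i) _).symm
      _ = ∑' i, Bi.l (M i) (D (N i * c)) := hswap
      _ = ∑' i, (Bi.l (M i * N i) (D c) + Bi.r c (Bi.l (M i) (D (N i)))) :=
          tsum_congr expand
      _ = (∑' i, Bi.l (M i * N i) (D c)) + ∑' i, Bi.r c (Bi.l (M i) (D (N i))) :=
          Summable.tsum_add hsum3 hsum4
      _ = Bi.l.flip (D c) (∑' i, M i * N i) + Bi.r c v₀ := by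
          rw [(Bi.l.flip (D c)).map_tsum hMN, (Bi.r c).map_tsum hsum0]
          rfl
      _ = Bi.l 1 (D c) + Bi.r c v₀ := by rw [h1]; rfl
  have hK6 : D c = Bi.l 1 (D c) + Bi.r c (D 1) := by
    have := hD 1 c; rwa [one_mul] at this
  have hK7 : Bi.l c (Bi.r 1 (D 1)) = 0 := by
    have h2 := hD c 1
    rw [mul_one] at h2
    have h3 : Bi.r 1 (D c) = Bi.r 1 (Bi.l c (D 1)) + Bi.r 1 (Bi.r 1 (D c)) := by
      rw [← map_add]; exact congrArg _ h2
    have hr11 : Bi.r 1 (Bi.r 1 (D c)) = Bi.r 1 (D c) := by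
      rw [← Bi.r_mul, one_mul]
    rw [hr11] at h3
    have h4 : Bi.r 1 (Bi.l c (D 1)) = 0 := by
      have := right_eq_add.mp h3; exact this
    rw [Bi.lr_comm]; exact h4
  have hK8 : Bi.r c (Bi.r 1 (D 1)) = Bi.r c (D 1) := by
    rw [← Bi.r_mul, one_mul]
  have final : Bi.l c (v₀ - Bi.r 1 (D 1)) - Bi.r c (v₀ - Bi.r 1 (D 1))
      = Bi.l 1 (D c) + Bi.r c (D 1) := by
    rw [map_sub, map_sub, hlc, hK7, hK8]; abel
  rw [final]; exact hK6

private lemma sumleft {A : Type} [NormedRing A] {x y : ℕ → A}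
    (h : Summable fun n => ‖x n‖ * ‖y n‖) (u : A) :
    Summable fun n => ‖u * x n‖ * ‖y n‖ := by
  apply Summable.of_nonneg_of_le (fun n => by positivity) ?_ (h.mul_left ‖u‖)
  intro n
  calc ‖u * x n‖ * ‖y n‖ ≤ (‖u‖ * ‖x n‖) * ‖y n‖ :=
        mul_le_mul_of_nonneg_right (norm_mul_le _ _) (norm_nonneg _)
    _ = ‖u‖ * (‖x n‖ * ‖y n‖) := by ring

private lemma sumright {A : Type} [NormedRing A] {x y : ℕ → A}
    (h : Summable fun n => ‖x n‖ * ‖y n‖) (u : A) :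
    Summable fun n => ‖x n‖ * ‖y n * u‖ := by
  apply Summable.of_nonneg_of_le (fun n => by positivity) ?_ (h.mul_left ‖u‖)
  intro n
  calc ‖x n‖ * ‖y n * u‖ ≤ ‖x n‖ * (‖y n‖ * ‖u‖) :=
        mul_le_mul_of_nonneg_left (norm_mul_le _ _) (norm_nonneg _)
    _ = ‖u‖ * (‖x n‖ * ‖y n‖) := by ring


private lemma tsum_prod_nm {f : ℕ → ℕ → ℂ} (h : Summable fun p : ℕ × ℕ => f p.1 p.2) :
    (∑' p : ℕ × ℕ, f p.1 p.2) = ∑' n, ∑' m, f n m := Summable.tsum_prod (by exact h)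

private lemma tsum_prod_mn {f : ℕ → ℕ → ℂ} (h : Summable fun p : ℕ × ℕ => f p.1 p.2) :
    (∑' p : ℕ × ℕ, f p.1 p.2) = ∑' m, ∑' n, f n m := by
  rw [Summable.tsum_prod (by exact h)]
  exact (Summable.tsum_comm (by exact h)).symm

set_option maxHeartbeats 2000000 in
theorem diagonal_of_projTensorAlg
    (A A' : Type) [NormedRing A] [NormedAlgebra ℂ A] [CompleteSpace A]
    [NormedRing A'] [NormedAlgebra ℂ A'] [CompleteSpace A']
    (hA : Contractible A) (hA' : Contractible A')
    (a b : ℕ → A) (hdiag : IsDiagonal a b)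
    (a' b' : ℕ → A') (hdiag' : IsDiagonal a' b')
    (B : Type) [NormedRing B] [NormedAlgebra ℂ B] [CompleteSpace B]
    (P : ProjTensorAlg A A' B) :
    IsDiagonal (fun p : ℕ × ℕ => P.ι (a p.1) (a' p.2))
      (fun p : ℕ × ℕ => P.ι (b p.1) (b' p.2)) ∧
    Contractible B := by
  obtain ⟨hSa, h1a, hca⟩ := hdiag
  obtain ⟨hSa', h1a', hca'⟩ := hdiag'
  -- Clause 1 : absolute summability
  have hSB : Summable fun p : ℕ × ℕ => ‖P.ι (a p.1) (a' p.2)‖ * ‖P.ι (b p.1) (b' p.2)‖ := by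
    apply Summable.of_nonneg_of_le (fun p => by positivity) ?_
      (hSa.mul_of_nonneg hSa' (fun n => by positivity) (fun m => by positivity))
    intro p
    calc ‖P.ι (a p.1) (a' p.2)‖ * ‖P.ι (b p.1) (b' p.2)‖
        ≤ (‖a p.1‖ * ‖a' p.2‖) * (‖b p.1‖ * ‖b' p.2‖) :=
          mul_le_mul (P.norm_ι _ _) (P.norm_ι _ _) (norm_nonneg _) (by positivity)
      _ = (‖a p.1‖ * ‖b p.1‖) * (‖a' p.2‖ * ‖b' p.2‖) := by ring
  -- generic summability of bilinear evaluations
  have key_sum : ∀ (φ : B →L[ℂ] B →L[ℂ] ℂ) (x y : ℕ → A) (x' y' : ℕ → A'),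
      Summable (fun n => ‖x n‖ * ‖y n‖) → Summable (fun m => ‖x' m‖ * ‖y' m‖) →
      Summable fun p : ℕ × ℕ => φ (P.ι (x p.1) (x' p.2)) (P.ι (y p.1) (y' p.2)) := by
    intro φ x y x' y' hxy hxy'
    apply Summable.of_norm_bounded
      (((hxy.mul_of_nonneg hxy' (fun n => by positivity) (fun m => by positivity)).mul_left ‖φ‖))
    intro p
    calc ‖φ (P.ι (x p.1) (x' p.2)) (P.ι (y p.1) (y' p.2))‖
        ≤ ‖φ‖ * ‖P.ι (x p.1) (x' p.2)‖ * ‖P.ι (y p.1) (y' p.2)‖ := φ.le_opNorm₂ _ _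
      _ ≤ ‖φ‖ * (‖x p.1‖ * ‖x' p.2‖) * (‖y p.1‖ * ‖y' p.2‖) :=
          mul_le_mul (mul_le_mul_of_nonneg_left (P.norm_ι _ _)
              (ContinuousLinearMap.opNorm_nonneg φ))
            (P.norm_ι _ _) (norm_nonneg _) (by positivity)
      _ = ‖φ‖ * (‖x p.1‖ * ‖y p.1‖ * (‖x' p.2‖ * ‖y' p.2‖)) := by ring
  -- Clause 2 : the sum is 1
  have hsx : Summable fun n => a n * b n :=
    Summable.of_norm_bounded hSa fun n => norm_mul_le _ _
  have hsy : Summable fun m => a' m * b' m :=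
    Summable.of_norm_bounded hSa' fun m => norm_mul_le _ _
  have hProd : Summable fun p : ℕ × ℕ => P.ι (a p.1 * b p.1) (a' p.2 * b' p.2) := by
    apply Summable.of_norm_bounded
      (hSa.mul_of_nonneg hSa' (fun n => by positivity) (fun m => by positivity))
    intro p
    calc ‖P.ι (a p.1 * b p.1) (a' p.2 * b' p.2)‖
        ≤ ‖a p.1 * b p.1‖ * ‖a' p.2 * b' p.2‖ := P.norm_ι _ _
      _ ≤ (‖a p.1‖ * ‖b p.1‖) * (‖a' p.2‖ * ‖b' p.2‖) :=
          mul_le_mul (norm_mul_le _ _) (norm_mul_le _ _) (norm_nonneg _) (by positivity)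
  have clause2 : (∑' p : ℕ × ℕ, (P.ι (a p.1) (a' p.2)) * (P.ι (b p.1) (b' p.2))) = 1 := by
    rw [tsum_congr (fun p : ℕ × ℕ => P.ι_mul (a p.1) (a' p.2) (b p.1) (b' p.2))]
    rw [Summable.tsum_prod hProd]
    rw [tsum_congr (fun n => ((P.ι (a n * b n)).map_tsum hsy).symm)]
    rw [h1a']
    have e2 : (∑' n, P.ι (a n * b n) 1) = P.ι.flip 1 (∑' n, a n * b n) := by
      rw [(P.ι.flip 1).map_tsum hsx]
      exact tsum_congr fun n => rfl
    rw [e2, h1a]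
    simpa using P.ι_one
  -- Clause 3 : the commutation property
  have clause3 : ∀ (φ : B →L[ℂ] B →L[ℂ] ℂ) (c : B),
      (∑' p : ℕ × ℕ, φ (c * P.ι (a p.1) (a' p.2)) (P.ι (b p.1) (b' p.2)))
        = ∑' p : ℕ × ℕ, φ (P.ι (a p.1) (a' p.2)) (P.ι (b p.1) (b' p.2) * c) := by
    intro φ c
    set g : ℕ × ℕ → B →L[ℂ] ℂ := fun p =>
      (φ.flip (P.ι (b p.1) (b' p.2))).comp
        ((ContinuousLinearMap.mul ℂ B).flip (P.ι (a p.1) (a' p.2))) with hgdef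
    set k : ℕ × ℕ → B →L[ℂ] ℂ := fun p =>
      (φ (P.ι (a p.1) (a' p.2))).comp
        ((ContinuousLinearMap.mul ℂ B) (P.ι (b p.1) (b' p.2))) with hkdef
    have hgap : ∀ p (z : B), g p z = φ (z * P.ι (a p.1) (a' p.2)) (P.ι (b p.1) (b' p.2)) := by
      intro p z; simp [hgdef]
    have hkap : ∀ p (z : B), k p z = φ (P.ι (a p.1) (a' p.2)) (P.ι (b p.1) (b' p.2) * z) := by
      intro p z; simp [hkdef]
    have hgs : Summable g := by
      apply Summable.of_norm_bounded (hSB.mul_left ‖φ‖)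
      intro p
      calc ‖g p‖ ≤ ‖φ.flip (P.ι (b p.1) (b' p.2))‖ *
            ‖(ContinuousLinearMap.mul ℂ B).flip (P.ι (a p.1) (a' p.2))‖ :=
            ContinuousLinearMap.opNorm_comp_le _ _
        _ ≤ (‖φ‖ * ‖P.ι (b p.1) (b' p.2)‖) * ‖P.ι (a p.1) (a' p.2)‖ := by
            apply mul_le_mul _ _ (norm_nonneg _) (by positivity)
            · exact (ContinuousLinearMap.le_opNorm _ _).trans
                (by rw [ContinuousLinearMap.opNorm_flip])
            · exact (ContinuousLinearMap.le_opNorm _ _).trans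
                (by rw [ContinuousLinearMap.opNorm_flip]
                    exact mul_le_of_le_one_left (norm_nonneg _)
                      (ContinuousLinearMap.opNorm_mul_le ℂ B))
        _ = ‖φ‖ * (‖P.ι (a p.1) (a' p.2)‖ * ‖P.ι (b p.1) (b' p.2)‖) := by ring
    have hks : Summable k := by
      apply Summable.of_norm_bounded (hSB.mul_left ‖φ‖)
      intro p
      calc ‖k p‖ ≤ ‖φ (P.ι (a p.1) (a' p.2))‖ *
            ‖(ContinuousLinearMap.mul ℂ B) (P.ι (b p.1) (b' p.2))‖ :=
            ContinuousLinearMap.opNorm_comp_le _ _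
        _ ≤ (‖φ‖ * ‖P.ι (a p.1) (a' p.2)‖) * ‖P.ι (b p.1) (b' p.2)‖ :=
            mul_le_mul (ContinuousLinearMap.le_opNorm _ _)
              (ContinuousLinearMap.opNorm_mul_apply_le _ _ _) (norm_nonneg _) (by positivity)
        _ = ‖φ‖ * (‖P.ι (a p.1) (a' p.2)‖ * ‖P.ι (b p.1) (b' p.2)‖) := by ring
    have evalg : ∀ z : B, (∑' p, g p) z = ∑' p, g p z := by
      intro z
      have := (ContinuousLinearMap.apply ℂ ℂ z).map_tsum hgs
      simpa [ContinuousLinearMap.apply_apply] using this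
    have evalk : ∀ z : B, (∑' p, k p) z = ∑' p, k p z := by
      intro z
      have := (ContinuousLinearMap.apply ℂ ℂ z).map_tsum hks
      simpa [ContinuousLinearMap.apply_apply] using this
    -- the core identity on elementary tensors
    have core : ∀ (u : A) (u' : A'),
        (∑' p : ℕ × ℕ, φ (P.ι (u * a p.1) (u' * a' p.2)) (P.ι (b p.1) (b' p.2)))
          = ∑' p : ℕ × ℕ, φ (P.ι (a p.1) (a' p.2)) (P.ι (b p.1 * u) (b' p.2 * u')) := by
      intro u u'
      have S1 := key_sum φ (fun n => u * a n) b (fun m => u' * a' m) b'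
        (sumleft hSa u) (sumleft hSa' u')
      have S2 := key_sum φ a (fun n => b n * u) (fun m => u' * a' m) b'
        (sumright hSa u) (sumleft hSa' u')
      have S3 := key_sum φ a (fun n => b n * u) a' (fun m => b' m * u')
        (sumright hSa u) (sumright hSa' u')
      -- step 1: move u from the a-variable to the b-variable
      have step1 : (∑' p : ℕ × ℕ, φ (P.ι (u * a p.1) (u' * a' p.2)) (P.ι (b p.1) (b' p.2)))
          = ∑' p : ℕ × ℕ, φ (P.ι (a p.1) (u' * a' p.2)) (P.ι (b p.1 * u) (b' p.2)) := by
        rw [tsum_prod_mn (f := fun n m => φ (P.ι (u * a n) (u' * a' m)) (P.ι (b n) (b' m)))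
              (by exact S1),
            tsum_prod_mn (f := fun n m => φ (P.ι (a n) (u' * a' m)) (P.ι (b n * u) (b' m)))
              (by exact S2)]
        apply tsum_congr
        intro m
        set φ1 : A →L[ℂ] A →L[ℂ] ℂ :=
          ((ContinuousLinearMap.compL ℂ A B ℂ).flip (P.ι.flip (b' m))).comp
            (φ.comp (P.ι.flip (u' * a' m))) with hφ1
        have hφ1ap : ∀ x y, φ1 x y = φ (P.ι x (u' * a' m)) (P.ι y (b' m)) := by
          intro x y; simp [hφ1]
        calc (∑' n, φ (P.ι (u * a n) (u' * a' m)) (P.ι (b n) (b' m)))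
            = ∑' n, φ1 (u * a n) (b n) := tsum_congr fun n => (hφ1ap _ _).symm
          _ = ∑' n, φ1 (a n) (b n * u) := hca φ1 u
          _ = ∑' n, φ (P.ι (a n) (u' * a' m)) (P.ι (b n * u) (b' m)) :=
              tsum_congr fun n => hφ1ap _ _
      -- step 2: move u' from the a'-variable to the b'-variable
      have step2 : (∑' p : ℕ × ℕ, φ (P.ι (a p.1) (u' * a' p.2)) (P.ι (b p.1 * u) (b' p.2)))
          = ∑' p : ℕ × ℕ, φ (P.ι (a p.1) (a' p.2)) (P.ι (b p.1 * u) (b' p.2 * u')) := by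
        rw [tsum_prod_nm (f := fun n m => φ (P.ι (a n) (u' * a' m)) (P.ι (b n * u) (b' m)))
              (by exact S2),
            tsum_prod_nm (f := fun n m => φ (P.ι (a n) (a' m)) (P.ι (b n * u) (b' m * u')))
              (by exact S3)]
        apply tsum_congr
        intro n
        set φ2 : A' →L[ℂ] A' →L[ℂ] ℂ :=
          ((ContinuousLinearMap.compL ℂ A' B ℂ).flip (P.ι (b n * u))).comp
            (φ.comp (P.ι (a n))) with hφ2
        have hφ2ap : ∀ x y, φ2 x y = φ (P.ι (a n) x) (P.ι (b n * u) y) := by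
          intro x y; simp [hφ2]
        calc (∑' m, φ (P.ι (a n) (u' * a' m)) (P.ι (b n * u) (b' m)))
            = ∑' m, φ2 (u' * a' m) (b' m) := tsum_congr fun m => (hφ2ap _ _).symm
          _ = ∑' m, φ2 (a' m) (b' m * u') := hca' φ2 u'
          _ = ∑' m, φ (P.ι (a n) (a' m)) (P.ι (b n * u) (b' m * u')) :=
              tsum_congr fun m => hφ2ap _ _
      rw [step1, step2]
    have heq : (∑' p, g p) = (∑' p, k p) := by
      apply ContinuousLinearMap.ext_on P.dense_span
      rintro _ ⟨⟨u, u'⟩, rfl⟩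
      rw [evalg, evalk]
      calc (∑' p, g p (P.ι u u'))
          = ∑' p : ℕ × ℕ, φ (P.ι (u * a p.1) (u' * a' p.2)) (P.ι (b p.1) (b' p.2)) := by
            apply tsum_congr
            intro p
            rw [hgap, P.ι_mul]
        _ = ∑' p : ℕ × ℕ, φ (P.ι (a p.1) (a' p.2)) (P.ι (b p.1 * u) (b' p.2 * u')) := core u u'
        _ = ∑' p, k p (P.ι u u') := by
            apply tsum_congr
            intro p
            rw [hkap, P.ι_mul]
    calc (∑' p : ℕ × ℕ, φ (c * P.ι (a p.1) (a' p.2)) (P.ι (b p.1) (b' p.2)))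
        = ∑' p, g p c := tsum_congr fun p => (hgap p c).symm
      _ = (∑' p, g p) c := (evalg c).symm
      _ = (∑' p, k p) c := by rw [heq]
      _ = ∑' p, k p c := evalk c
      _ = ∑' p : ℕ × ℕ, φ (P.ι (a p.1) (a' p.2)) (P.ι (b p.1) (b' p.2) * c) :=
          tsum_congr fun p => hkap p c
  exact ⟨⟨hSB, clause2, clause3⟩, contractible_of_isDiagonal ⟨hSB, clause2, clause3⟩⟩
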